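/- Let A be a subring of ℝ that is dense in ℝ, let m, n be positive integers, let M be an m×n matrix with rational entries and b ∈ ℚ^m, and let K = {x ∈ ℝ^n : for every i, Σ_j M[i,j]·x_j ≤ b_i}. Then K contains a point all of whose coordinates lie in A if and only if K is nonempty and the affine span of K over ℝ (the smallest affine subspace of ℝ^n containing K) contains a point all of whose coordinates lie in A. -/

import Mathlib

open Finset

/-- The linear functional `x ↦ ∑ j, r j * x j` on `ℝⁿ` given by a rational row `r`. -/
noncomputable def rowLin {n : ℕ} (r : Fin n → ℚ) : (Fin n → ℝ) →ₗ[ℝ] ℝ :=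
  ∑ j, (r j : ℝ) • (LinearMap.proj j : (Fin n → ℝ) →ₗ[ℝ] ℝ)

lemma rowLin_apply {n : ℕ} (r : Fin n → ℚ) (x : Fin n → ℝ) :
    rowLin r x = ∑ j, (r j : ℝ) * x j := by
  simp [rowLin, smul_eq_mul]

lemma rowLin_cast {n : ℕ} (r : Fin n → ℚ) (q : Fin n → ℚ) :
    rowLin r (fun j => (q j : ℝ)) = ((∑ j, r j * q j : ℚ) : ℝ) := by
  rw [rowLin_apply]; push_cast; rfl

lemma rat_mul_den {q : ℚ} {D : ℕ} (h : q.den ∣ D) : ∃ z : ℤ, (q * D : ℚ) = (z : ℚ) := by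
  obtain ⟨k, rfl⟩ := h
  refine ⟨q.num * k, ?_⟩
  have hden : ((q.den : ℚ)) ≠ 0 := Nat.cast_ne_zero.mpr q.den_nz
  have h1 : (q * q.den : ℚ) = q.num := by
    nth_rewrite 1 [← Rat.num_div_den q]
    rw [div_mul_cancel₀ _ hden]
  push_cast
  rw [← mul_assoc, h1]

/-- The real kernel of a finite system of rational linear equations is spanned by
its rational points. -/
lemma span_ratPoints {n : ℕ} {ι : Type*} (r : ι → Fin n → ℚ) (s : Finset ι) :
    Submodule.span ℝ {v : Fin n → ℝ |
        (∀ i ∈ s, rowLin (r i) v = 0) ∧ ∃ q : Fin n → ℚ, v = fun j => (q j : ℝ)} =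
      ⨅ i ∈ s, LinearMap.ker (rowLin (r i)) := by
  classical
  induction s using Finset.induction_on with
  | empty =>
      apply le_antisymm
      · simp
      · have hbase : Set.range (Pi.basisFun ℝ (Fin n)) ⊆
            {v : Fin n → ℝ | (∀ i ∈ (∅ : Finset ι), rowLin (r i) v = 0) ∧
              ∃ q : Fin n → ℚ, v = fun j => (q j : ℝ)} := by
          rintro _ ⟨j, rfl⟩
          refine ⟨by simp, fun k => if k = j then 1 else 0, ?_⟩
          rw [Pi.basisFun_apply]
          funext k
          by_cases h : k = j <;> simp [Pi.single_apply, h]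
        calc (⨅ i ∈ (∅ : Finset ι), LinearMap.ker (rowLin (r i)))
            ≤ ⊤ := le_top
          _ = Submodule.span ℝ (Set.range (Pi.basisFun ℝ (Fin n))) :=
              (Module.Basis.span_eq _).symm
          _ ≤ _ := Submodule.span_mono hbase
  | @insert a t hat ih =>
      rw [Finset.iInf_insert]
      apply le_antisymm
      · rw [Submodule.span_le]
        rintro v ⟨hv1, hv2⟩
        refine Submodule.mem_inf.mpr ⟨?_, ?_⟩
        · exact LinearMap.mem_ker.mpr (hv1 a (Finset.mem_insert_self a t))
        · simp only [Submodule.mem_iInf, LinearMap.mem_ker]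
          exact fun i hi => hv1 i (Finset.mem_insert_of_mem hi)
      · intro v hv
        obtain ⟨hva, hvV⟩ := Submodule.mem_inf.mp hv
        rw [LinearMap.mem_ker] at hva
        have hvS : v ∈ Submodule.span ℝ {v : Fin n → ℝ |
            (∀ i ∈ t, rowLin (r i) v = 0) ∧ ∃ q : Fin n → ℚ, v = fun j => (q j : ℝ)} := by
          rw [ih]; exact hvV
        by_cases hcase : ∀ w : Fin n → ℝ, (∀ i ∈ t, rowLin (r i) w = 0) →
            (∃ q : Fin n → ℚ, w = fun j => (q j : ℝ)) → rowLin (r a) w = 0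
        · refine Submodule.span_mono ?_ hvS
          rintro w ⟨hwt, hwq⟩
          refine ⟨?_, hwq⟩
          intro i hi
          rcases Finset.mem_insert.mp hi with h | h
          · subst h; exact hcase w hwt hwq
          · exact hwt i h
        · push_neg at hcase
          obtain ⟨w0, hw0t, ⟨q0, rfl⟩, hw0a⟩ := hcase
          have hc0 : rowLin (r a) (fun j => ((q0 j : ℝ))) = ((∑ j, r a j * q0 j : ℚ) : ℝ) :=
            rowLin_cast _ _
          set π : (Fin n → ℝ) →ₗ[ℝ] (Fin n → ℝ) :=
            LinearMap.id - (rowLin (r a) (fun j => ((q0 j : ℝ))))⁻¹ •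
              ((rowLin (r a)).smulRight (fun j => ((q0 j : ℝ)))) with hπdef
          have hπ : ∀ w, π w = w - ((rowLin (r a) (fun j => ((q0 j : ℝ))))⁻¹ * rowLin (r a) w) •
              (fun j => ((q0 j : ℝ))) := by
            intro w
            simp [hπdef, LinearMap.smulRight_apply, smul_smul]
          have hπv : π v = v := by rw [hπ, hva]; simp
          have himg : π '' {w : Fin n → ℝ |
              (∀ i ∈ t, rowLin (r i) w = 0) ∧ ∃ q : Fin n → ℚ, w = fun j => (q j : ℝ)} ⊆
              {w : Fin n → ℝ |
              (∀ i ∈ insert a t, rowLin (r i) w = 0) ∧ ∃ q : Fin n → ℚ, w = fun j => (q j : ℝ)} := by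
            rintro _ ⟨w, ⟨hwt, qw, rfl⟩, rfl⟩
            constructor
            · intro i hi
              rcases Finset.mem_insert.mp hi with h | h
              · subst h
                rw [hπ, map_sub, map_smul, smul_eq_mul]
                field_simp
                simp
              · rw [hπ, map_sub, map_smul, hwt i h, hw0t i h, smul_eq_mul, mul_zero, sub_zero]
            · have hc : (rowLin (r a) (fun j => ((q0 j : ℝ))))⁻¹ *
                  rowLin (r a) (fun j => ((qw j : ℝ))) =
                  (((∑ j, r a j * q0 j)⁻¹ * (∑ j, r a j * qw j) : ℚ) : ℝ) := by
                rw [rowLin_cast, rowLin_cast]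
                push_cast
                ring
              refine ⟨fun j => qw j - ((∑ j, r a j * q0 j)⁻¹ * (∑ j, r a j * qw j)) * q0 j, ?_⟩
              rw [hπ, hc]
              funext j
              simp only [Pi.sub_apply, Pi.smul_apply, smul_eq_mul]
              push_cast
              ring
          have : π v ∈ Submodule.span ℝ (π '' {w : Fin n → ℝ |
              (∀ i ∈ t, rowLin (r i) w = 0) ∧ ∃ q : Fin n → ℚ, w = fun j => (q j : ℝ)}) :=
            Submodule.apply_mem_span_image_of_mem_span π hvS
          rw [hπv] at this
          exact Submodule.span_mono himg this

set_option maxHeartbeats 2000000 in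
/-- Feasibility of a rational linear program inside a dense subring `A` of `ℝ`:
the feasible region `K` contains a point with all coordinates in `A` if and only
if `K` is nonempty and the real affine span of `K` contains a point with all
coordinates in `A`. -/
theorem lp_solution_in_dense_subring_iff
    (A : Subring ℝ) (hA : Dense (A : Set ℝ))
    (m n : ℕ) (hm : 0 < m) (hn : 0 < n)
    (M : Matrix (Fin m) (Fin n) ℚ) (b : Fin m → ℚ)
    (K : Set (Fin n → ℝ))
    (hK : K = {x : Fin n → ℝ | ∀ i : Fin m, ∑ j : Fin n, (M i j : ℝ) * x j ≤ (b i : ℝ)}) :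
    (∃ x ∈ K, ∀ j, x j ∈ A) ↔
      (K.Nonempty ∧ ∃ x ∈ affineSpan ℝ K, ∀ j, x j ∈ A) := by
  classical
  set g : Fin m → ((Fin n → ℝ) →ₗ[ℝ] ℝ) := fun i => rowLin (M i) with hg
  have hmem : ∀ x : Fin n → ℝ, x ∈ K ↔ ∀ i, g i x ≤ (b i : ℝ) := by
    intro x
    rw [hK]
    simp [hg, rowLin_apply]
  constructor
  · rintro ⟨x, hxK, hxA⟩
    exact ⟨⟨x, hxK⟩, x, subset_affineSpan ℝ K hxK, hxA⟩
  · rintro ⟨⟨x0, hx0⟩, y, hySpan, hyA⟩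
    -- the set of constraints tight on all of K
    set I : Set (Fin m) := {i | ∀ x ∈ K, g i x = (b i : ℝ)} with hI
    -- y satisfies all tight constraints
    have hyE : ∀ i ∈ I, g i y = (b i : ℝ) := by
      set E : AffineSubspace ℝ (Fin n → ℝ) :=
        { carrier := {x | ∀ i ∈ I, g i x = (b i : ℝ)}
          smul_vsub_vadd_mem' := by
            intro c p1 p2 p3 h1 h2 h3 i hi
            have e1 := h1 i hi
            have e2 := h2 i hi
            have e3 := h3 i hi
            show g i (c • (p1 -ᵥ p2) +ᵥ p3) = (b i : ℝ)
            rw [vsub_eq_sub, vadd_eq_add, map_add, map_smul, map_sub, e1, e2, e3]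
            simp } with hE
      have hKE : K ⊆ (E : Set (Fin n → ℝ)) := fun x hx i hi => hi x hx
      exact (affineSpan_le.mpr hKE) hySpan
    -- a point of K strictly satisfying all non-tight constraints
    have key : ∀ s : Finset (Fin m), ∃ x, x ∈ K ∧ ∀ i ∈ s, i ∉ I → g i x < (b i : ℝ) := by
      intro s
      induction s using Finset.induction_on with
      | empty => exact ⟨x0, hx0, by simp⟩
      | @insert aa tt haat ihh =>
          obtain ⟨x, hxK, hx⟩ := ihh
          by_cases haI : aa ∈ I
          · refine ⟨x, hxK, ?_⟩
            intro i hi hiI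
            rcases Finset.mem_insert.mp hi with h | h
            · exact absurd (h ▸ haI) hiI
            · exact hx i h hiI
          · have : ∃ w ∈ K, g aa w ≠ (b aa : ℝ) := by
              by_contra h
              push_neg at h
              exact haI h
            obtain ⟨w, hwK, hwne⟩ := this
            have hwlt : g aa w < (b aa : ℝ) :=
              lt_of_le_of_ne ((hmem w).mp hwK aa) hwne
            refine ⟨(1/2 : ℝ) • x + (1/2 : ℝ) • w, ?_, ?_⟩
            · rw [hmem]
              intro i
              have h1 := (hmem x).mp hxK i
              have h2 := (hmem w).mp hwK i
              rw [map_add, map_smul, map_smul, smul_eq_mul, smul_eq_mul]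
              linarith
            · intro i hi hiI
              have h1 := (hmem x).mp hxK i
              have h2 := (hmem w).mp hwK i
              rw [map_add, map_smul, map_smul, smul_eq_mul, smul_eq_mul]
              rcases Finset.mem_insert.mp hi with h | h
              · subst h; linarith
              · have := hx i h hiI; linarith
    obtain ⟨xs, hxsK, hxs⟩ := key Finset.univ
    have hxslt : ∀ i, i ∉ I → g i xs < (b i : ℝ) := fun i hi =>
      hxs i (Finset.mem_univ i) hi
    -- a positive margin δ
    set sI' : Finset (Fin m) := Finset.univ.filter (fun i => i ∉ I) with hsI'
    have hδex : ∃ δ : ℝ, 0 < δ ∧ ∀ i, i ∉ I → δ ≤ (b i : ℝ) - g i xs := by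
      rcases sI'.eq_empty_or_nonempty with h | h
      · refine ⟨1, one_pos, fun i hi => ?_⟩
        exfalso
        have : i ∈ sI' := by simp [hsI', hi]
        rw [h] at this
        exact absurd this (Finset.notMem_empty i)
      · have hne : (sI'.image fun i => (b i : ℝ) - g i xs).Nonempty := h.image _
        refine ⟨(sI'.image fun i => (b i : ℝ) - g i xs).min' hne, ?_, ?_⟩
        · obtain ⟨i, hi, hieq⟩ := Finset.mem_image.mp ((sI'.image _).min'_mem hne)
          rw [← hieq]
          have : i ∉ I := (Finset.mem_filter.mp hi).2
          have := hxslt i this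
          linarith
        · intro i hi
          exact Finset.min'_le _ _ (Finset.mem_image.mpr ⟨i, by simp [hsI', hi], rfl⟩)
    obtain ⟨δ, hδpos, hδ⟩ := hδex
    -- the difference d lies in the span of the rational kernel points
    set d : Fin n → ℝ := xs - y with hd
    set sI : Finset (Fin m) := Finset.univ.filter (fun i => i ∈ I) with hsIdef
    have hmem_sI : ∀ i, i ∈ sI ↔ i ∈ I := by intro i; simp [hsIdef]
    have hdmem : d ∈ ⨅ i ∈ sI, LinearMap.ker (rowLin (M i)) := by
      simp only [Submodule.mem_iInf, LinearMap.mem_ker]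
      intro i hi
      have hiI := (hmem_sI i).mp hi
      have h1 : g i xs = (b i : ℝ) := hiI xs hxsK
      have h2 := hyE i hiI
      show rowLin (M i) d = 0
      have : rowLin (M i) d = g i xs - g i y := by rw [hd, map_sub]
      rw [this, h1, h2, sub_self]
    rw [← span_ratPoints (fun i => M i) sI, Submodule.mem_span_set] at hdmem
    obtain ⟨c, hcsupp, hcsum⟩ := hdmem
    have hsum' : ∑ w ∈ c.support, c w • w = d := hcsum
    -- properties of support vectors
    have hsupp_ker : ∀ w ∈ c.support, ∀ i ∈ I, g i w = 0 := by
      intro w hw i hi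
      have := (hcsupp hw).1 i ((hmem_sI i).mpr hi)
      exact this
    -- integer rescalings of support vectors
    have hstep : ∀ w : Fin n → ℝ, ∃ (u : Fin n → ℤ) (D : ℕ), 0 < D ∧
        (w ∈ c.support → ∀ j, (D : ℝ) * w j = (u j : ℝ)) := by
      intro w
      by_cases hw : w ∈ c.support
      · obtain ⟨q, hq⟩ := (hcsupp hw).2
        set D : ℕ := ∏ j, (q j).den with hD
        have hDpos : 0 < D := Finset.prod_pos (fun j _ => (q j).pos)
        have hdvd : ∀ j, (q j).den ∣ D := fun j =>
          Finset.dvd_prod_of_mem _ (Finset.mem_univ j)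
        have : ∀ j, ∃ z : ℤ, (q j * D : ℚ) = (z : ℚ) := fun j => rat_mul_den (hdvd j)
        choose u hu using this
        refine ⟨u, D, hDpos, fun _ j => ?_⟩
        have : w j = ((q j : ℚ) : ℝ) := by rw [hq]
        rw [this]
        calc (D : ℝ) * ((q j : ℚ) : ℝ) = ((q j * D : ℚ) : ℝ) := by push_cast; ring
          _ = ((u j : ℤ) : ℝ) := by rw [hu j]; push_cast; rfl
      · exact ⟨0, 1, one_pos, fun h => absurd h hw⟩
    choose u D hDpos hDu using hstep
    -- bound on the functionals
    set R : (Fin n → ℝ) → ℝ := fun w => ∑ i, |g i w| with hR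
    have hRnonneg : ∀ w, 0 ≤ R w := fun w => Finset.sum_nonneg (fun i _ => abs_nonneg _)
    have hRbound : ∀ i w, |g i w| ≤ R w := fun i w =>
      Finset.single_le_sum (fun i _ => abs_nonneg (g i w)) (Finset.mem_univ i)
    set N : ℕ := c.support.card with hN
    -- approximate coefficients in A
    have happrox : ∀ w : Fin n → ℝ, ∃ aw : ℝ, aw ∈ A ∧
        |aw - c w / (D w : ℝ)| < δ / (((D w : ℝ) * (R w + 1)) * ((N : ℝ) + 1)) := by
      intro w
      have htolpos : 0 < δ / (((D w : ℝ) * (R w + 1)) * ((N : ℝ) + 1)) := by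
        have h1 : (0 : ℝ) < (D w : ℝ) := Nat.cast_pos.mpr (hDpos w)
        have h2 : (0 : ℝ) < R w + 1 := by linarith [hRnonneg w]
        have h3 : (0 : ℝ) < (N : ℝ) + 1 := by positivity
        positivity
      obtain ⟨aw, hawA, hawd⟩ := Metric.mem_closure_iff.mp
        (hA (c w / (D w : ℝ))) _ htolpos
      refine ⟨aw, hawA, ?_⟩
      rw [Real.dist_eq] at hawd
      rw [abs_sub_comm]
      exact hawd
    choose a haA haclose using happrox
    -- the candidate point
    set v : Fin n → ℝ := ∑ w ∈ c.support, (a w * (D w : ℝ)) • w with hv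
    set z : Fin n → ℝ := y + v with hz
    -- coordinates of z lie in A
    have hvA : ∀ j, v j ∈ A := by
      intro j
      have : v j = ∑ w ∈ c.support, (a w * (D w : ℝ)) * w j := by
        rw [hv]
        simp [Finset.sum_apply]
      rw [this]
      refine Subring.sum_mem A (fun w hw => ?_)
      have : a w * (D w : ℝ) * w j = a w * ((D w : ℝ) * w j) := by ring
      rw [this, hDu w hw j]
      exact A.mul_mem (haA w) (intCast_mem A (u w j))
    have hzA : ∀ j, z j ∈ A := fun j => A.add_mem (hyA j) (hvA j)
    -- g i v for tight constraints
    have hgv : ∀ i ∈ I, g i v = 0 := by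
      intro i hi
      rw [hv, map_sum]
      refine Finset.sum_eq_zero (fun w hw => ?_)
      rw [map_smul, hsupp_ker w hw i hi, smul_zero]
    -- the error bound for non-tight constraints
    have herr : ∀ i, |g i v - g i d| < δ := by
      intro i
      have hgd : g i d = ∑ w ∈ c.support, c w * g i w := by
        rw [← hsum', map_sum]
        congr 1
        funext w
        rw [map_smul, smul_eq_mul]
      have hgv' : g i v = ∑ w ∈ c.support, (a w * (D w : ℝ)) * g i w := by
        rw [hv, map_sum]
        congr 1
        funext w
        rw [map_smul, smul_eq_mul]
      have hdiff : g i v - g i d = ∑ w ∈ c.support, (a w * (D w : ℝ) - c w) * g i w := by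
        rw [hgv', hgd, ← Finset.sum_sub_distrib]
        congr 1
        funext w
        ring
      rw [hdiff]
      have hterm : ∀ w ∈ c.support,
          |(a w * (D w : ℝ) - c w) * g i w| ≤ δ / ((N : ℝ) + 1) := by
        intro w hw
        have hDw : (0 : ℝ) < (D w : ℝ) := Nat.cast_pos.mpr (hDpos w)
        have hRw := hRnonneg w
        have hNpos : (0 : ℝ) < (N : ℝ) + 1 := by positivity
        have h1 : |a w * (D w : ℝ) - c w| = |a w - c w / (D w : ℝ)| * (D w : ℝ) := by
          rw [← abs_of_pos hDw, ← abs_mul]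
          congr 1
          field_simp
          rw [abs_of_pos hDw]; ring
        have h2 : |a w * (D w : ℝ) - c w| ≤
            (δ / (((D w : ℝ) * (R w + 1)) * ((N : ℝ) + 1))) * (D w : ℝ) := by
          rw [h1]
          exact mul_le_mul_of_nonneg_right (le_of_lt (haclose w)) hDw.le
        calc |(a w * (D w : ℝ) - c w) * g i w|
            = |a w * (D w : ℝ) - c w| * |g i w| := abs_mul _ _
          _ ≤ ((δ / (((D w : ℝ) * (R w + 1)) * ((N : ℝ) + 1))) * (D w : ℝ)) * R w := by
              refine mul_le_mul h2 (hRbound i w) (abs_nonneg _) ?_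
              positivity
          _ ≤ δ / ((N : ℝ) + 1) := by
              rw [div_mul_eq_mul_div, div_mul_eq_mul_div, div_le_div_iff₀ (by positivity) hNpos]
              have hkey : 0 ≤ δ * (D w : ℝ) * ((N : ℝ) + 1) := by positivity
              nlinarith [hkey, hRw, hDw.le, hδpos.le, hNpos.le,
                mul_nonneg (mul_nonneg hδpos.le hDw.le) hNpos.le]
      calc |∑ w ∈ c.support, (a w * (D w : ℝ) - c w) * g i w|
          ≤ ∑ w ∈ c.support, |(a w * (D w : ℝ) - c w) * g i w| :=
            Finset.abs_sum_le_sum_abs _ _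
        _ ≤ ∑ _w ∈ c.support, δ / ((N : ℝ) + 1) := Finset.sum_le_sum hterm
        _ = (N : ℝ) * (δ / ((N : ℝ) + 1)) := by
            rw [Finset.sum_const, hN, nsmul_eq_mul]
        _ < δ := by
            have hNpos : (0 : ℝ) < (N : ℝ) + 1 := by positivity
            rw [show (N : ℝ) * (δ / ((N : ℝ) + 1)) = ((N : ℝ) * δ) / ((N : ℝ) + 1) by ring,
              div_lt_iff₀ hNpos]
            nlinarith
    -- z is in K
    have hzK : z ∈ K := by
      rw [hmem]
      intro i
      by_cases hiI : i ∈ I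
      · have : g i z = (b i : ℝ) := by
          rw [hz, map_add, hyE i hiI, hgv i hiI, add_zero]
        rw [this]
      · have hxsy : g i xs = g i y + g i d := by
          rw [hd, map_sub]; ring
        have hzeq : g i z = g i y + g i v := by rw [hz, map_add]
        have h1 := herr i
        have h2 := hδ i hiI
        have h3 : g i v - g i d ≤ |g i v - g i d| := le_abs_self _
        rw [hzeq]
        linarith
    exact ⟨z, hzK, hzA⟩
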